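/- Let X be a metric space, let φ : X × [0,∞) → X be continuous, let C : X → [0,∞] be lower semicontinuous, and let α > 0. Then the function (x,θ) ↦ ∫₀^θ e^{−αt}·C(φ(x,t)) dt (a Lebesgue integral with values in [0,∞]) is lower semicontinuous on X × [0,∞], where [0,∞] is the one-point compactification of [0,∞) and the value at θ = ∞ is ∫₀^∞ e^{−αt}·C(φ(x,t)) dt. -/

import Mathlib

open MeasureTheory Filter Set
open scoped NNReal ENNReal

private lemma aux_lsc {X : Type*} [MetricSpace X] (φ : X × ℝ≥0 → X) (hφ : Continuous φ)
    (C : X → ℝ≥0∞) (hC : LowerSemicontinuous C) (α : ℝ) (t : ℝ) :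
    LowerSemicontinuous (fun p : X × ℝ≥0∞ =>
      if ENNReal.ofReal t < p.2 then
        ENNReal.ofReal (Real.exp (-α * t)) * C (φ (p.1, Real.toNNReal t))
      else 0) := by
  intro p y hy
  dsimp only at hy ⊢
  by_cases h : ENNReal.ofReal t < p.2
  · rw [if_pos h] at hy
    -- the condition holds on a neighborhood
    have h2 : ∀ᶠ q : X × ℝ≥0∞ in nhds p, ENNReal.ofReal t < q.2 :=
      continuous_snd.continuousAt (isOpen_Ioi.mem_nhds (show p.2 ∈ Ioi (ENNReal.ofReal t) from h))
    -- the value is lower semicontinuous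
    have hval : LowerSemicontinuous (fun p : X × ℝ≥0∞ =>
        ENNReal.ofReal (Real.exp (-α * t)) * C (φ (p.1, Real.toNNReal t))) := by
      have hmul : Continuous fun z : ℝ≥0∞ => ENNReal.ofReal (Real.exp (-α * t)) * z :=
        ENNReal.continuous_const_mul ENNReal.ofReal_ne_top
      have hmono : Monotone fun z : ℝ≥0∞ => ENNReal.ofReal (Real.exp (-α * t)) * z :=
        fun a b hab => mul_le_mul_right hab _
      have hcomp : LowerSemicontinuous fun p : X × ℝ≥0∞ => C (φ (p.1, Real.toNNReal t)) :=
        hC.comp (hφ.comp (continuous_fst.prodMk continuous_const))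
      exact hmul.comp_lowerSemicontinuous hcomp hmono
    filter_upwards [h2, hval p y hy] with q hq1 hq2
    rw [if_pos hq1]
    exact hq2
  · rw [if_neg h] at hy
    exact absurd hy (by simp)

/-- Let `X` be a metric space, `φ : X × [0,∞) → X` continuous,
`C : X → [0,∞]` lower semicontinuous and `α > 0`.  Then the function
`(x, θ) ↦ ∫₀^θ e^{-α t} C(φ(x,t)) dt` (a Lebesgue integral with values in `[0,∞]`),
defined on `X × [0,∞]` where `[0,∞]` is the one-point compactification of `[0,∞)`
(realized as `ℝ≥0∞`, with the value at `θ = ∞` being `∫₀^∞ e^{-α t} C(φ(x,t)) dt`),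
is lower semicontinuous. -/
theorem stmt0 {X : Type*} [MetricSpace X] (φ : X × ℝ≥0 → X) (hφ : Continuous φ)
    (C : X → ℝ≥0∞) (hC : LowerSemicontinuous C) (α : ℝ) (hα : 0 < α) :
    LowerSemicontinuous (fun p : X × ℝ≥0∞ =>
      ∫⁻ t in Set.Ioi (0 : ℝ),
        if ENNReal.ofReal t < p.2 then
          ENNReal.ofReal (Real.exp (-α * t)) * C (φ (p.1, Real.toNNReal t))
        else 0) := by
  set g : X × ℝ≥0∞ → ℝ → ℝ≥0∞ := fun p t =>
    if ENNReal.ofReal t < p.2 then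
      ENNReal.ofReal (Real.exp (-α * t)) * C (φ (p.1, Real.toNNReal t))
    else 0 with hg
  set F : X × ℝ≥0∞ → ℝ≥0∞ := fun p => ∫⁻ t in Set.Ioi (0 : ℝ), g p t with hF
  show LowerSemicontinuous F
  intro p y hy
  by_contra hcon
  rw [Filter.not_eventually] at hcon
  have hfreq : ∃ᶠ q in nhds p, F q ≤ y := hcon.mono fun q hq => not_lt.mp hq
  obtain ⟨u, hu, hun⟩ := exists_seq_forall_of_frequently hfreq
  -- measurability of the integrand
  have hmeas : ∀ q : X × ℝ≥0∞, Measurable (fun t : ℝ => g q t) := by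
    intro q
    have hset : MeasurableSet {t : ℝ | ENNReal.ofReal t < q.2} :=
      measurableSet_lt ENNReal.measurable_ofReal measurable_const
    have h1 : Measurable fun t : ℝ => ENNReal.ofReal (Real.exp (-α * t)) :=
      (ENNReal.continuous_ofReal.comp (Real.continuous_exp.comp
        (continuous_const.mul continuous_id))).measurable
    have h2 : Measurable fun t : ℝ => C (φ (q.1, Real.toNNReal t)) :=
      (hC.comp (hφ.comp (continuous_const.prodMk
        continuous_real_toNNReal))).measurable
    exact Measurable.ite hset (h1.mul h2) measurable_const
  -- pointwise lower bound via lower semicontinuity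
  have hpt : ∀ t : ℝ, g p t ≤ liminf (fun n => g (u n) t) atTop := by
    intro t
    refine le_of_forall_lt_imp_le_of_dense fun c hc => ?_
    have hev : ∀ᶠ q in nhds p, c < g q t := aux_lsc φ hφ C hC α t p c hc
    have hev' : ∀ᶠ n in atTop, c < g (u n) t := hu.eventually hev
    exact le_liminf_of_le (by isBoundedDefault) (hev'.mono fun n hn => hn.le)
  have fatou :
      (∫⁻ t in Set.Ioi (0 : ℝ), liminf (fun n => g (u n) t) atTop) ≤
        liminf (fun n => F (u n)) atTop :=
    lintegral_liminf_le fun n => hmeas (u n)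
  have hle : F p ≤ y := by
    calc F p ≤ ∫⁻ t in Set.Ioi (0 : ℝ), liminf (fun n => g (u n) t) atTop :=
          lintegral_mono hpt
      _ ≤ liminf (fun n => F (u n)) atTop := fatou
      _ ≤ liminf (fun _ : ℕ => y) atTop :=
          liminf_le_liminf (Eventually.of_forall hun)
      _ = y := liminf_const y
  exact absurd hy (not_lt.mpr hle)
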